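/- Coarsening of a compatible interior patch of valence 4 yields a conforming configuration of two triangles: let a, b, c, d be points in the Euclidean plane such that the triples (a, b, c) and (a, b, d) are affinely independent and the interiors of convexHull{a, b, c} and convexHull{a, b, d} are disjoint, and let v denote the midpoint of the segment ab. Then the union of the four triangles of the patch around v equals the union of the two coarsened triangles: convexHull{a, v, c} ∪ convexHull{v, b, c} ∪ convexHull{b, v, d} ∪ convexHull{v, a, d} = convexHull{a, b, c} ∪ convexHull{a, b, d}, the two coarsened triangles intersect exactly in the common edge, convexHull{a, b, c} ∩ convexHull{a, b, d} = convexHull{a, b}, and after elimination of v the point v lies on the common edge: v ∈ convexHull{a, b}. (Eliminating a newest vertex v whose patch consists of exactly 4 elements merges the four triangles pairwise into two father triangles without creating hanging nodes.) -/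

import Mathlib

open Set AffineMap

variable {E : Type*} [NormedAddCommGroup E] [NormedSpace ℝ E]

lemma segment_split' (a b : E) :
    segment ℝ a b = segment ℝ a (midpoint ℝ a b) ∪ segment ℝ (midpoint ℝ a b) b := by
  apply Set.Subset.antisymm
  · intro y hy
    rw [segment_eq_image] at hy
    obtain ⟨t, ⟨ht0, ht1⟩, rfl⟩ := hy
    rcases le_or_gt t (1/2) with h | h
    · left
      rw [segment_eq_image]
      exact ⟨2*t, ⟨by linarith, by linarith⟩,
        by rw [midpoint_eq_smul_add, invOf_eq_inv]; module⟩
    · right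
      rw [segment_eq_image]
      exact ⟨2*t-1, ⟨by linarith, by linarith⟩,
        by rw [midpoint_eq_smul_add, invOf_eq_inv]; module⟩
  · exact Set.union_subset
      ((convex_segment a b).segment_subset (left_mem_segment ℝ a b) (midpoint_mem_segment a b))
      ((convex_segment a b).segment_subset (midpoint_mem_segment a b) (right_mem_segment ℝ a b))

lemma tri_split (a b c : E) :
    convexHull ℝ {a, b, c} =
      convexHull ℝ {a, midpoint ℝ a b, c} ∪ convexHull ℝ {midpoint ℝ a b, b, c} := by
  have h1 : ({a, b, c} : Set E) = insert c {a, b} := by ext; simp; tauto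
  have h2 : ({a, midpoint ℝ a b, c} : Set E) = insert c {a, midpoint ℝ a b} := by
    ext; simp; tauto
  have h3 : ({midpoint ℝ a b, b, c} : Set E) = insert c {midpoint ℝ a b, b} := by
    ext; simp; tauto
  have e1 : convexHull ℝ (insert c ({a, b} : Set E)) = convexJoin ℝ {c} (segment ℝ a b) := by
    rw [convexHull_insert ⟨a, by simp⟩, convexHull_pair]
  have e2 : convexHull ℝ (insert c ({a, midpoint ℝ a b} : Set E)) =
      convexJoin ℝ {c} (segment ℝ a (midpoint ℝ a b)) := by
    rw [convexHull_insert ⟨a, by simp⟩, convexHull_pair]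
  have e3 : convexHull ℝ (insert c ({midpoint ℝ a b, b} : Set E)) =
      convexJoin ℝ {c} (segment ℝ (midpoint ℝ a b) b) := by
    rw [convexHull_insert ⟨b, by simp⟩, convexHull_pair]
  rw [h1, h2, h3, e1, e2, e3, segment_split', convexJoin_union_right]

open Set AffineMap Finset

abbrev E2 := EuclideanSpace ℝ (Fin 2)

lemma range_triple (a b c : E2) : Set.range ![a, b, c] = {a, b, c} := by
  ext x
  constructor
  · rintro ⟨i, rfl⟩; fin_cases i <;> simp
  · rintro (rfl | rfl | rfl)
    exacts [⟨0, rfl⟩, ⟨1, rfl⟩, ⟨2, rfl⟩]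

noncomputable def triBasis (a b c : E2) (h : AffineIndependent ℝ ![a, b, c]) :
    AffineBasis (Fin 3) ℝ E2 :=
  ⟨![a, b, c], h, h.affineSpan_eq_top_iff_card_eq_finrank_add_one.mpr (by
    simp [finrank_euclideanSpace])⟩

lemma triBasis_apply (a b c : E2) (h : AffineIndependent ℝ ![a, b, c]) (i : Fin 3) :
    triBasis a b c h i = ![a, b, c] i := rfl

lemma mem_tri_iff (a b c : E2) (h : AffineIndependent ℝ ![a, b, c]) (x : E2) :
    x ∈ convexHull ℝ ({a, b, c} : Set E2) ↔ ∀ i, 0 ≤ (triBasis a b c h).coord i x := by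
  rw [← range_triple a b c]
  have : Set.range ![a, b, c] = Set.range ⇑(triBasis a b c h) := rfl
  rw [this, (triBasis a b c h).convexHull_eq_nonneg_coord]
  rfl

lemma mem_int_tri_iff (a b c : E2) (h : AffineIndependent ℝ ![a, b, c]) (x : E2) :
    x ∈ interior (convexHull ℝ ({a, b, c} : Set E2)) ↔
      ∀ i, 0 < (triBasis a b c h).coord i x := by
  rw [← range_triple a b c]
  have : Set.range ![a, b, c] = Set.range ⇑(triBasis a b c h) := rfl
  rw [this, (triBasis a b c h).interior_convexHull]
  rfl

lemma coord_expand (a b c : E2) (h : AffineIndependent ℝ ![a, b, c])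
    (g : E2 →ᵃ[ℝ] ℝ) (x : E2) :
    g x = (triBasis a b c h).coord 0 x * g a + (triBasis a b c h).coord 1 x * g b +
      (triBasis a b c h).coord 2 x * g c := by
  set B := triBasis a b c h
  conv_lhs => rw [← B.affineCombination_coord_eq_self x]
  rw [Finset.map_affineCombination _ _ _ (B.sum_coord_apply_eq_one x),
    Finset.affineCombination_eq_linear_combination _ _ _ (B.sum_coord_apply_eq_one x),
    Fin.sum_univ_three]
  rfl

lemma point_expand (a b c : E2) (h : AffineIndependent ℝ ![a, b, c]) (x : E2) :
    x = (triBasis a b c h).coord 0 x • a + (triBasis a b c h).coord 1 x • b +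
      (triBasis a b c h).coord 2 x • c := by
  set B := triBasis a b c h
  conv_lhs => rw [← B.affineCombination_coord_eq_self x]
  rw [Finset.affineCombination_eq_linear_combination _ _ _ (B.sum_coord_apply_eq_one x),
    Fin.sum_univ_three]
  rfl

open Set AffineMap Finset


section Main
variable (a b c d : EuclideanSpace ℝ (Fin 2))

set_option maxHeartbeats 1000000 in
lemma tri_inter (h₁ : AffineIndependent ℝ ![a, b, c])
    (h₂ : AffineIndependent ℝ ![a, b, d])
    (hdisj : Disjoint (interior (convexHull ℝ {a, b, c}))
      (interior (convexHull ℝ {a, b, d}))) :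
    convexHull ℝ {a, b, c} ∩ convexHull ℝ {a, b, d} =
      convexHull ℝ ({a, b} : Set E2) := by
  set B := triBasis a b c h₁ with hB
  set B' := triBasis a b d h₂ with hB'
  have hca : B.coord 2 a = 0 := by
    rw [show a = B 0 from rfl, AffineBasis.coord_apply]; simp
  have hcb : B.coord 2 b = 0 := by
    rw [show b = B 1 from rfl, AffineBasis.coord_apply]; simp
  have hcc : B.coord 2 c = 1 := by
    rw [show c = B 2 from rfl, AffineBasis.coord_apply]; simp
  set w0 := B.coord 0 d with hw0
  set w1 := B.coord 1 d with hw1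
  set w2 := B.coord 2 d with hw2
  have hsum : w0 + w1 + w2 = 1 := by
    have := B.sum_coord_apply_eq_one d
    rwa [Fin.sum_univ_three] at this
  -- w2 ≠ 0
  have hw2ne : w2 ≠ 0 := by
    intro h0
    have hd := point_expand a b c h₁ d
    rw [← hw0, ← hw1, ← hw2, h0, zero_smul, add_zero] at hd
    have hkey := affineIndependent_iff.mp h₂ Finset.univ ![w0, w1, -1]
      (by rw [Fin.sum_univ_three]; simp; linarith)
      (by
        rw [Fin.sum_univ_three]
        show w0 • a + w1 • b + (-1 : ℝ) • d = 0
        rw [hd]; module)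
      2 (Finset.mem_univ 2)
    have hv2 : ![w0, w1, (-1:ℝ)] 2 = -1 := rfl
    rw [hv2] at hkey
    norm_num at hkey
  -- w2 < 0
  have hw2neg : w2 < 0 := by
    rcases hw2ne.lt_or_gt with h | h
    · exact h
    exfalso
    set v := midpoint ℝ a b with hv
    set t : ℝ := 1 / (4 * (1 + |w0| + |w1|)) with ht
    have habs0 : (0:ℝ) ≤ |w0| := abs_nonneg _
    have habs1 : (0:ℝ) ≤ |w1| := abs_nonneg _
    have hden : (0:ℝ) < 4 * (1 + |w0| + |w1|) := by positivity
    have ht0 : 0 < t := by positivity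
    have htb : t * (4 * (1 + |w0| + |w1|)) = 1 := by
      rw [ht]; field_simp
    have ht4 : t ≤ 1/4 := by nlinarith
    have htw0 : t * |w0| ≤ 1/4 := by nlinarith
    have htw1 : t * |w1| ≤ 1/4 := by nlinarith
    set p := AffineMap.lineMap v d t with hp
    -- coordinates of v
    have hmid : ∀ (g : (EuclideanSpace ℝ (Fin 2)) →ᵃ[ℝ] ℝ),
        g v = (g a + g b) / 2 := by
      intro g
      rw [hv, AffineMap.map_midpoint, midpoint_eq_smul_add, invOf_eq_inv,
        smul_eq_mul]
      ring
    have hlin : ∀ (g : (EuclideanSpace ℝ (Fin 2)) →ᵃ[ℝ] ℝ),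
        g p = t * (g d - g v) + g v := by
      intro g
      rw [hp, AffineMap.apply_lineMap, AffineMap.lineMap_apply]
      simp [smul_eq_mul]
    -- p in interior of abc
    have hp1 : p ∈ interior (convexHull ℝ ({a, b, c} : Set E2)) := by
      rw [mem_int_tri_iff a b c h₁]
      intro i
      fin_cases i
      · show (0:ℝ) < B.coord 0 p
        rw [hlin (B.coord 0), hmid (B.coord 0)]
        rw [show B.coord 0 a = 1 by
              rw [show a = B 0 from rfl, AffineBasis.coord_apply]; simp,
            show B.coord 0 b = 0 by
              rw [show b = B 1 from rfl, AffineBasis.coord_apply]; simp,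
            ← hw0]
        have := neg_abs_le w0
        nlinarith
      · show (0:ℝ) < B.coord 1 p
        rw [hlin (B.coord 1), hmid (B.coord 1)]
        rw [show B.coord 1 a = 0 by
              rw [show a = B 0 from rfl, AffineBasis.coord_apply]; simp,
            show B.coord 1 b = 1 by
              rw [show b = B 1 from rfl, AffineBasis.coord_apply]; simp,
            ← hw1]
        have := neg_abs_le w1
        nlinarith
      · show (0:ℝ) < B.coord 2 p
        rw [hlin (B.coord 2), hmid (B.coord 2), hca, hcb, ← hw2]
        nlinarith
    -- p in interior of abd
    have hp2 : p ∈ interior (convexHull ℝ ({a, b, d} : Set E2)) := by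
      rw [mem_int_tri_iff a b d h₂]
      intro i
      fin_cases i
      · show (0:ℝ) < B'.coord 0 p
        rw [hlin (B'.coord 0), hmid (B'.coord 0)]
        rw [show B'.coord 0 a = 1 by
              rw [show a = B' 0 from rfl, AffineBasis.coord_apply]; simp,
            show B'.coord 0 b = 0 by
              rw [show b = B' 1 from rfl, AffineBasis.coord_apply]; simp,
            show B'.coord 0 d = 0 by
              rw [show d = B' 2 from rfl, AffineBasis.coord_apply]; simp]
        nlinarith
      · show (0:ℝ) < B'.coord 1 p
        rw [hlin (B'.coord 1), hmid (B'.coord 1)]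
        rw [show B'.coord 1 a = 0 by
              rw [show a = B' 0 from rfl, AffineBasis.coord_apply]; simp,
            show B'.coord 1 b = 1 by
              rw [show b = B' 1 from rfl, AffineBasis.coord_apply]; simp,
            show B'.coord 1 d = 0 by
              rw [show d = B' 2 from rfl, AffineBasis.coord_apply]; simp]
        nlinarith
      · show (0:ℝ) < B'.coord 2 p
        rw [hlin (B'.coord 2), hmid (B'.coord 2)]
        rw [show B'.coord 2 a = 0 by
              rw [show a = B' 0 from rfl, AffineBasis.coord_apply]; simp,
            show B'.coord 2 b = 0 by
              rw [show b = B' 1 from rfl, AffineBasis.coord_apply]; simp,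
            show B'.coord 2 d = 1 by
              rw [show d = B' 2 from rfl, AffineBasis.coord_apply]; simp]
        nlinarith
    exact Set.disjoint_left.mp hdisj hp1 hp2
  -- now prove the intersection equality
  ext x
  constructor
  · rintro ⟨hx1, hx2⟩
    rw [mem_tri_iff a b c h₁] at hx1
    rw [mem_tri_iff a b d h₂] at hx2
    set s0 := B'.coord 0 x with hs0
    set s1 := B'.coord 1 x with hs1
    set s2 := B'.coord 2 x with hs2
    have hssum : s0 + s1 + s2 = 1 := by
      have := B'.sum_coord_apply_eq_one x
      rwa [Fin.sum_univ_three] at this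
    have hfx : B.coord 2 x = s2 * w2 := by
      have := coord_expand a b d h₂ (B.coord 2) x
      rw [← hs0, ← hs1, ← hs2, hca, hcb, ← hw2] at this
      rw [this]; ring
    have hfx0 : 0 ≤ B.coord 2 x := hx1 2
    have hs20 : 0 ≤ s2 := hx2 2
    have hs2z : s2 = 0 := by nlinarith
    have hx := point_expand a b d h₂ x
    rw [← hs0, ← hs1, ← hs2, hs2z, zero_smul, add_zero] at hx
    rw [convexHull_pair]
    exact ⟨s0, s1, hx2 0, hx2 1, by linarith, hx.symm⟩
  · intro hx
    have hsub : ({a, b} : Set E2) ⊆ {a, b, c} := by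
      intro y hy; rcases hy with rfl | rfl <;> simp
    have hsub' : ({a, b} : Set E2) ⊆ {a, b, d} := by
      intro y hy; rcases hy with rfl | rfl <;> simp
    exact ⟨convexHull_mono hsub hx, convexHull_mono hsub' hx⟩

end Main
/-- Coarsening of a compatible interior patch of valence 4: if v is the
midpoint of ab and the four triangles (a,v,c), (v,b,c), (b,v,d), (v,a,d)
form the patch around v, then their union equals the union of the two
coarsened father triangles (a,b,c) and (a,b,d), the two father triangles
intersect exactly in their common edge, and v lies on that common edge. -/
theorem coarsen_compatible_valence4
    (a b c d : EuclideanSpace ℝ (Fin 2))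
    (h₁ : AffineIndependent ℝ ![a, b, c])
    (h₂ : AffineIndependent ℝ ![a, b, d])
    (hdisj : Disjoint (interior (convexHull ℝ {a, b, c}))
      (interior (convexHull ℝ {a, b, d}))) :
    (convexHull ℝ {a, midpoint ℝ a b, c} ∪ convexHull ℝ {midpoint ℝ a b, b, c} ∪
        convexHull ℝ {b, midpoint ℝ a b, d} ∪ convexHull ℝ {midpoint ℝ a b, a, d} =
      convexHull ℝ {a, b, c} ∪ convexHull ℝ {a, b, d}) ∧
    convexHull ℝ {a, b, c} ∩ convexHull ℝ {a, b, d} = convexHull ℝ {a, b} ∧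
    midpoint ℝ a b ∈ convexHull ℝ ({a, b} : Set (EuclideanSpace ℝ (Fin 2))) := by
  refine ⟨?_, tri_inter a b c d h₁ h₂ hdisj, ?_⟩
  · have e1 : ({b, midpoint ℝ a b, d} : Set E2) = {midpoint ℝ a b, b, d} :=
      Set.insert_comm _ _ _
    have e2 : ({midpoint ℝ a b, a, d} : Set E2) = {a, midpoint ℝ a b, d} :=
      Set.insert_comm _ _ _
    rw [e1, e2, tri_split a b c, tri_split a b d]
    ext x
    simp only [Set.mem_union]
    tauto
  · rw [convexHull_pair]
    exact midpoint_mem_segment a b
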